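/- Let X be a nonempty finite type and let p, q be probability mass functions on X. For every function D : X → ℝ with 0 < D x < 1 for all x, one has ∑_{x∈X} [ p x · log(D x) + q x · log(1 − D x) ] ≤ ∑_{x∈X} [ p x · log(p x/(p x + q x)) + q x · log(q x/(p x + q x)) ], with equality if and only if D x = p x/(p x + q x) for all x. -/

import Mathlib

open Finset

lemma key_le (a b t : ℝ) (ha : 0 < a) (hb : 0 < b) (ht0 : 0 < t) (ht1 : t < 1) :
    a * Real.log t + b * Real.log (1 - t) ≤
      a * Real.log (a / (a + b)) + b * Real.log (b / (a + b)) := by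
  have hs : 0 < a + b := by linarith
  have h1t : 0 < 1 - t := by linarith
  have hu : 0 < t * (a + b) / a := by positivity
  have hv : 0 < (1 - t) * (a + b) / b := by positivity
  have l1 : Real.log (t * (a + b) / a) ≤ t * (a + b) / a - 1 :=
    Real.log_le_sub_one_of_pos hu
  have l2 : Real.log ((1 - t) * (a + b) / b) ≤ (1 - t) * (a + b) / b - 1 :=
    Real.log_le_sub_one_of_pos hv
  have e1 : Real.log (t * (a + b) / a) = Real.log t - Real.log (a / (a + b)) := by
    rw [Real.log_div (by positivity) ha.ne', Real.log_mul ht0.ne' hs.ne',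
      Real.log_div ha.ne' hs.ne']
    ring
  have e2 : Real.log ((1 - t) * (a + b) / b) = Real.log (1 - t) - Real.log (b / (a + b)) := by
    rw [Real.log_div (by positivity) hb.ne', Real.log_mul h1t.ne' hs.ne',
      Real.log_div hb.ne' hs.ne']
    ring
  have m1 : a * Real.log (t * (a + b) / a) ≤ t * (a + b) - a := by
    have := mul_le_mul_of_nonneg_left l1 ha.le
    calc a * Real.log (t * (a + b) / a) ≤ a * (t * (a + b) / a - 1) := this
      _ = t * (a + b) - a := by field_simp
  have m2 : b * Real.log ((1 - t) * (a + b) / b) ≤ (1 - t) * (a + b) - b := by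
    have := mul_le_mul_of_nonneg_left l2 hb.le
    calc b * Real.log ((1 - t) * (a + b) / b) ≤ b * ((1 - t) * (a + b) / b - 1) := this
      _ = (1 - t) * (a + b) - b := by field_simp
  rw [e1] at m1
  rw [e2] at m2
  nlinarith [m1, m2]

lemma key_lt (a b t : ℝ) (ha : 0 < a) (hb : 0 < b) (ht0 : 0 < t) (ht1 : t < 1)
    (hne : t ≠ a / (a + b)) :
    a * Real.log t + b * Real.log (1 - t) <
      a * Real.log (a / (a + b)) + b * Real.log (b / (a + b)) := by
  have hs : 0 < a + b := by linarith
  have h1t : 0 < 1 - t := by linarith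
  have hu : 0 < t * (a + b) / a := by positivity
  have hv : 0 < (1 - t) * (a + b) / b := by positivity
  have hune : t * (a + b) / a ≠ 1 := by
    intro h
    apply hne
    field_simp at h ⊢
    linarith
  have l1 : Real.log (t * (a + b) / a) < t * (a + b) / a - 1 :=
    Real.log_lt_sub_one_of_pos hu hune
  have l2 : Real.log ((1 - t) * (a + b) / b) ≤ (1 - t) * (a + b) / b - 1 :=
    Real.log_le_sub_one_of_pos hv
  have e1 : Real.log (t * (a + b) / a) = Real.log t - Real.log (a / (a + b)) := by
    rw [Real.log_div (by positivity) ha.ne', Real.log_mul ht0.ne' hs.ne',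
      Real.log_div ha.ne' hs.ne']
    ring
  have e2 : Real.log ((1 - t) * (a + b) / b) = Real.log (1 - t) - Real.log (b / (a + b)) := by
    rw [Real.log_div (by positivity) hb.ne', Real.log_mul h1t.ne' hs.ne',
      Real.log_div hb.ne' hs.ne']
    ring
  have m1 : a * Real.log (t * (a + b) / a) < t * (a + b) - a := by
    have := mul_lt_mul_of_pos_left l1 ha
    calc a * Real.log (t * (a + b) / a) < a * (t * (a + b) / a - 1) := this
      _ = t * (a + b) - a := by field_simp
  have m2 : b * Real.log ((1 - t) * (a + b) / b) ≤ (1 - t) * (a + b) - b := by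
    have := mul_le_mul_of_nonneg_left l2 hb.le
    calc b * Real.log ((1 - t) * (a + b) / b) ≤ b * ((1 - t) * (a + b) / b - 1) := this
      _ = (1 - t) * (a + b) - b := by field_simp
  rw [e1] at m1
  rw [e2] at m2
  nlinarith [m1, m2]

/-- Optimal local discriminator (Lemma 1): for pmfs `p, q` on a nonempty finite type,
the GAN objective is maximized over discriminators `D` with values in `(0,1)` by
`D x = p x / (p x + q x)`, with equality iff `D` equals this everywhere. -/
theorem stmt_1 {X : Type*} [Fintype X] [Nonempty X]
    (p q : X → ℝ)
    (hp : ∀ x, 0 < p x) (hps : ∑ x, p x = 1)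
    (hq : ∀ x, 0 < q x) (hqs : ∑ x, q x = 1)
    (D : X → ℝ) (hD0 : ∀ x, 0 < D x) (hD1 : ∀ x, D x < 1) :
    (∑ x, (p x * Real.log (D x) + q x * Real.log (1 - D x))) ≤
      (∑ x, (p x * Real.log (p x / (p x + q x)) + q x * Real.log (q x / (p x + q x)))) ∧
    ((∑ x, (p x * Real.log (D x) + q x * Real.log (1 - D x))) =
      (∑ x, (p x * Real.log (p x / (p x + q x)) + q x * Real.log (q x / (p x + q x)))) ↔
      ∀ x, D x = p x / (p x + q x)) := by
  have hle : ∀ x ∈ Finset.univ (α := X),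
      p x * Real.log (D x) + q x * Real.log (1 - D x) ≤
        p x * Real.log (p x / (p x + q x)) + q x * Real.log (q x / (p x + q x)) :=
    fun x _ => key_le (p x) (q x) (D x) (hp x) (hq x) (hD0 x) (hD1 x)
  refine ⟨Finset.sum_le_sum hle, ⟨?_, ?_⟩⟩
  · intro heq
    by_contra hc
    push_neg at hc
    obtain ⟨x0, hx0⟩ := hc
    have : (∑ x, (p x * Real.log (D x) + q x * Real.log (1 - D x))) <
        (∑ x, (p x * Real.log (p x / (p x + q x)) + q x * Real.log (q x / (p x + q x)))) :=
      Finset.sum_lt_sum hle ⟨x0, Finset.mem_univ x0,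
        key_lt (p x0) (q x0) (D x0) (hp x0) (hq x0) (hD0 x0) (hD1 x0) hx0⟩
    linarith
  · intro h
    apply Finset.sum_congr rfl
    intro x _
    have hs : 0 < p x + q x := by have := hp x; have := hq x; linarith
    rw [h x]
    have : 1 - p x / (p x + q x) = q x / (p x + q x) := by field_simp; ring
    rw [this]
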